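/- The projection of a stable matching of the translated instance is stable: let I be an SMTI-1TM instance, I' its translated SMI instance, and M' a stable matching of I'. Then the projection M = {(m_i,w_j) : (a_i,s_j) ∈ M' or (a_i,t_j) ∈ M'} is a (weakly) stable matching of I, i.e., no pair (m_i, w_j) blocks M in I. -/

import Mathlib

/-- An instance of the stable marriage problem with ties and incomplete lists (SMTI),
with men of type `α` and women of type `β`.  Each person's preference list is
represented by a rank function: `mpref m w = none` means woman `w` is unacceptable
to man `m`, and `mpref m w = some r` means `w` is acceptable with rank `r`
(smaller rank = more preferred; equal ranks = a tie).  This encodes exactly a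
total preorder on the set of acceptable partners. -/
structure SMInst (α β : Type) where
  mpref : α → β → Option ℕ
  wpref : β → α → Option ℕ

namespace SMInst

variable {α β : Type}

/-- Woman `w` is acceptable to man `m`. -/
def mAcc (I : SMInst α β) (m : α) (w : β) : Prop := (I.mpref m w).isSome

/-- Man `m` is acceptable to woman `w`. -/
def wAcc (I : SMInst α β) (w : β) (m : α) : Prop := (I.wpref w m).isSome

/-- Man `m` strictly prefers woman `w` to woman `w'`. -/
def mPref (I : SMInst α β) (m : α) (w w' : β) : Prop :=
  ∃ r r', I.mpref m w = some r ∧ I.mpref m w' = some r' ∧ r < r'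

/-- Woman `w` strictly prefers man `m` to man `m'`. -/
def wPref (I : SMInst α β) (w : β) (m m' : α) : Prop :=
  ∃ r r', I.wpref w m = some r ∧ I.wpref w m' = some r' ∧ r < r'

/-- `M` is a matching of `I`: all pairs mutually acceptable and no person in two pairs. -/
def IsMatching (I : SMInst α β) (M : Finset (α × β)) : Prop :=
  (∀ p ∈ M, I.mAcc p.1 p.2 ∧ I.wAcc p.2 p.1) ∧
  (∀ p ∈ M, ∀ q ∈ M, p.1 = q.1 → p = q) ∧
  (∀ p ∈ M, ∀ q ∈ M, p.2 = q.2 → p = q)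

/-- Man `m` is single (unmatched) in `M`. -/
def mSingle (M : Finset (α × β)) (m : α) : Prop := ∀ w, (m, w) ∉ M

/-- Woman `w` is single (unmatched) in `M`. -/
def wSingle (M : Finset (α × β)) (w : β) : Prop := ∀ m, (m, w) ∉ M

/-- `(m, w)` blocks `M` in instance `I`. -/
def Blocks (I : SMInst α β) (M : Finset (α × β)) (m : α) (w : β) : Prop :=
  I.mAcc m w ∧ I.wAcc w m ∧
  (mSingle M m ∨ ∃ w', (m, w') ∈ M ∧ I.mPref m w w') ∧
  (wSingle M w ∨ ∃ m', (m', w) ∈ M ∧ I.wPref w m m')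

/-- `M` is a (weakly) stable matching of `I`. -/
def IsStable (I : SMInst α β) (M : Finset (α × β)) : Prop :=
  I.IsMatching M ∧ ∀ m w, ¬ I.Blocks M m w

/-- Man `m` prefers matching `M'` to matching `M`, with respect to his list in `I`:
he is matched in `M'` to an acceptable partner, and he is either single in `M`
or strictly prefers his `M'`-partner to his `M`-partner. -/
def mPrefMatching (I : SMInst α β) (m : α) (M' M : Finset (α × β)) : Prop :=
  ∃ w, (m, w) ∈ M' ∧ I.mAcc m w ∧
    (mSingle M m ∨ ∃ w', (m, w') ∈ M ∧ I.mPref m w w')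

/-- Woman `w` prefers matching `M'` to matching `M`, with respect to her list in `I`. -/
def wPrefMatching (I : SMInst α β) (w : β) (M' M : Finset (α × β)) : Prop :=
  ∃ m, (m, w) ∈ M' ∧ I.wAcc w m ∧
    (wSingle M w ∨ ∃ m', (m', w) ∈ M ∧ I.wPref w m m')

/-- `I` and `I'` differ only in man `m`'s preference list. -/
def mDiffOnly (I I' : SMInst α β) (m : α) : Prop :=
  I.wpref = I'.wpref ∧ ∀ m', m' ≠ m → I.mpref m' = I'.mpref m'

/-- `I` and `I'` differ only in woman `w`'s preference list. -/
def wDiffOnly (I I' : SMInst α β) (w : β) : Prop :=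
  I.mpref = I'.mpref ∧ ∀ w', w' ≠ w → I.wpref w' = I'.wpref w'

/-- Men's lists contain no ties. -/
def MStrict (I : SMInst α β) : Prop :=
  ∀ m w w', I.mpref m w = I.mpref m w' → I.mAcc m w → w = w'

/-- Women's lists contain no ties. -/
def WStrict (I : SMInst α β) : Prop :=
  ∀ w m m', I.wpref w m = I.wpref w m' → I.wAcc w m → m = m'

/-- `I` is an SMI instance: no ties at all (all lists strictly ordered). -/
def NoTies (I : SMInst α β) : Prop := I.MStrict ∧ I.WStrict

/-- `I` is an SMTI-1TM instance: ties may occur only in men's lists,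
i.e. women's lists are strictly ordered. -/
def OneTM (I : SMInst α β) : Prop := I.WStrict

/-- `I'` is obtained from `I` by breaking ties: same acceptable sets, and every
strict preference of `I` is preserved in `I'` (so each person's list in `I'` is a
linear extension of the corresponding total preorder in `I`). -/
def Refines (I I' : SMInst α β) : Prop :=
  (∀ m w, I.mAcc m w ↔ I'.mAcc m w) ∧
  (∀ w m, I.wAcc w m ↔ I'.wAcc w m) ∧
  (∀ m w w', I.mPref m w w' → I'.mPref m w w') ∧
  (∀ w m m', I.wPref w m m' → I'.wPref w m m')

end SMInst

namespace SMInst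

/-- The translation of an SMTI-1TM instance `I` (with men/women indexed by `Fin n`)
into an SMI instance `I'`.  Men of `I'`: `Sum.inl i` is `a_i`, `Sum.inr j` is `b_j`.
Women of `I'`: `Sum.inl j` is `s_j`, `Sum.inr j` is `t_j`.
The strict list of `a_i` replaces each tie `(w_{j_1} … w_{j_k})` (indices increasing)
of `m_i`'s list by the strict segment `t_{j_1} … t_{j_k} s_{j_1} … s_{j_k}`;
`b_j`'s list is `s_j t_j`; `s_j`'s list is `Q(w_j)` followed by `b_j`; and
`t_j`'s list is `b_j` followed by `Q(w_j)`, where `Q(w_j)` is `w_j`'s list with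
each `m_i` replaced by `a_i`. -/
def translate {n : ℕ} (I : SMInst (Fin n) (Fin n)) :
    SMInst (Fin n ⊕ Fin n) (Fin n ⊕ Fin n) where
  mpref := fun a w =>
    match a, w with
    | Sum.inl i, Sum.inl j =>
        (I.mpref i j).map fun r =>
          2 * n * r + n +
            (Finset.univ.filter fun j' : Fin n => I.mpref i j' = some r ∧ j' < j).card
    | Sum.inl i, Sum.inr j =>
        (I.mpref i j).map fun r =>
          2 * n * r +
            (Finset.univ.filter fun j' : Fin n => I.mpref i j' = some r ∧ j' < j).card
    | Sum.inr i, Sum.inl j => if j = i then some 0 else none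
    | Sum.inr i, Sum.inr j => if j = i then some 1 else none
  wpref := fun w a =>
    match w, a with
    | Sum.inl j, Sum.inl i => I.wpref j i
    | Sum.inl j, Sum.inr i =>
        if i = j then some ((Finset.univ.sup fun i' : Fin n => (I.wpref j i').getD 0) + 1)
        else none
    | Sum.inr j, Sum.inl i => (I.wpref j i).map (· + 1)
    | Sum.inr j, Sum.inr i => if i = j then some 0 else none

/-- The projection of a matching `M'` of the translated instance back to the
original instance: `M = {(m_i, w_j) : (a_i, s_j) ∈ M' ∨ (a_i, t_j) ∈ M'}`. -/
def projectM {n : ℕ} (M' : Finset ((Fin n ⊕ Fin n) × (Fin n ⊕ Fin n))) :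
    Finset (Fin n × Fin n) :=
  Finset.univ.filter fun p =>
    (Sum.inl p.1, Sum.inl p.2) ∈ M' ∨ (Sum.inl p.1, Sum.inr p.2) ∈ M'

end SMInst

namespace SMInst

variable {n : ℕ}

lemma mem_projectM (M' : Finset ((Fin n ⊕ Fin n) × (Fin n ⊕ Fin n))) (i j : Fin n) :
    (i, j) ∈ projectM M' ↔
      (Sum.inl i, Sum.inl j) ∈ M' ∨ (Sum.inl i, Sum.inr j) ∈ M' := by
  simp [projectM]

lemma cnt_lt (I : SMInst (Fin n) (Fin n)) (i j : Fin n) (r : ℕ) :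
    (Finset.univ.filter fun j' : Fin n => I.mpref i j' = some r ∧ j' < j).card < n := by
  have h : (Finset.univ.filter fun j' : Fin n => I.mpref i j' = some r ∧ j' < j)
      ⊂ Finset.univ := by
    rw [Finset.ssubset_univ_iff]
    intro h
    have hj : j ∈ Finset.univ.filter fun j' : Fin n => I.mpref i j' = some r ∧ j' < j := by
      rw [h]; exact Finset.mem_univ j
    simp only [Finset.mem_filter] at hj
    exact absurd hj.2.2 (lt_irrefl j)
  simpa using Finset.card_lt_card h

lemma trans_mpref_s (I : SMInst (Fin n) (Fin n)) {i j : Fin n} {r : ℕ}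
    (h : I.mpref i j = some r) :
    (translate I).mpref (Sum.inl i) (Sum.inl j) =
      some (2 * n * r + n +
        (Finset.univ.filter fun j' : Fin n => I.mpref i j' = some r ∧ j' < j).card) := by
  simp [translate, h]

lemma trans_mpref_t (I : SMInst (Fin n) (Fin n)) {i j : Fin n} {r : ℕ}
    (h : I.mpref i j = some r) :
    (translate I).mpref (Sum.inl i) (Sum.inr j) =
      some (2 * n * r +
        (Finset.univ.filter fun j' : Fin n => I.mpref i j' = some r ∧ j' < j).card) := by
  simp [translate, h]

lemma trans_mPref (I : SMInst (Fin n) (Fin n)) {i j j' : Fin n}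
    (h : I.mPref i j j') {x y : Fin n ⊕ Fin n}
    (hx : x = Sum.inl j ∨ x = Sum.inr j) (hy : y = Sum.inl j' ∨ y = Sum.inr j') :
    (translate I).mPref (Sum.inl i) x y := by
  obtain ⟨r, r', hr, hr', hlt⟩ := h
  have hcj := cnt_lt I i j r
  have hmul : 2 * n * r + 2 * n ≤ 2 * n * r' := by
    have h1 : 2 * n * (r + 1) ≤ 2 * n * r' :=
      Nat.mul_le_mul_left (2 * n) hlt
    calc 2 * n * r + 2 * n = 2 * n * (r + 1) := by ring
    _ ≤ 2 * n * r' := h1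
  rcases hx with rfl | rfl <;> rcases hy with rfl | rfl
  · exact ⟨_, _, trans_mpref_s I hr, trans_mpref_s I hr', by linarith⟩
  · exact ⟨_, _, trans_mpref_s I hr, trans_mpref_t I hr', by linarith⟩
  · exact ⟨_, _, trans_mpref_t I hr, trans_mpref_s I hr', by linarith⟩
  · exact ⟨_, _, trans_mpref_t I hr, trans_mpref_t I hr', by linarith⟩

end SMInst

open SMInst

/-- The projection of a stable matching of the translated instance is a (weakly)
stable matching of the original SMTI-1TM instance. -/
theorem projection_is_stable {n : ℕ}
    (I : SMInst (Fin n) (Fin n)) (h1tm : I.OneTM)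
    (M' : Finset ((Fin n ⊕ Fin n) × (Fin n ⊕ Fin n)))
    (hM' : (SMInst.translate I).IsStable M') :
    I.IsStable (SMInst.projectM M') := by
  obtain ⟨⟨hAcc, hMinj, hWinj⟩, hStab⟩ := hM'
  -- a b-man's partner can only be his own s or t
  have hb_partner : ∀ (j : Fin n) (z : Fin n ⊕ Fin n), (Sum.inr j, z) ∈ M' →
      z = Sum.inl j ∨ z = Sum.inr j := by
    intro j z hz
    have hacc := (hAcc _ hz).1
    rcases z with k | k
    · rcases eq_or_ne k j with rfl | hne
      · exact Or.inl rfl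
      · exfalso; simp [SMInst.mAcc, SMInst.translate, hne] at hacc
    · rcases eq_or_ne k j with rfl | hne
      · exact Or.inr rfl
      · exfalso; simp [SMInst.mAcc, SMInst.translate, hne] at hacc
  -- any partner of an a-man projects
  have hAi : ∀ (i : Fin n) (x : Fin n ⊕ Fin n), (Sum.inl i, x) ∈ M' →
      ∃ j, (x = Sum.inl j ∨ x = Sum.inr j) ∧ (i, j) ∈ projectM M' := by
    intro i x hx
    rcases x with j | j
    · exact ⟨j, Or.inl rfl, (mem_projectM M' i j).mpr (Or.inl hx)⟩
    · exact ⟨j, Or.inr rfl, (mem_projectM M' i j).mpr (Or.inr hx)⟩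
  -- man side of blocking transfers
  have hManSide : ∀ (m : Fin n) (X : Fin n ⊕ Fin n) (j : Fin n),
      (X = Sum.inl j ∨ X = Sum.inr j) →
      (mSingle (projectM M') m ∨ ∃ w', (m, w') ∈ projectM M' ∧ I.mPref m j w') →
      (mSingle M' (Sum.inl m) ∨
        ∃ x, (Sum.inl m, x) ∈ M' ∧ (SMInst.translate I).mPref (Sum.inl m) X x) := by
    intro m X j hX h
    rcases h with h | ⟨j', hj', hp⟩
    · left
      intro x hx
      obtain ⟨j'', hj'', hm⟩ := hAi m x hx
      exact h j'' hm
    · right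
      rcases (mem_projectM M' m j').mp hj' with h' | h'
      · exact ⟨_, h', trans_mPref I hp hX (Or.inl rfl)⟩
      · exact ⟨_, h', trans_mPref I hp hX (Or.inr rfl)⟩
  -- if both s_j and t_j are matched to a-men, contradiction (via b_j blocking with t_j)
  have hNotBoth : ∀ (i i' j : Fin n),
      (Sum.inl i, Sum.inl j) ∈ M' → (Sum.inl i', Sum.inr j) ∈ M' → False := by
    intro i i' j hs ht
    have hb1 : (Sum.inr j, Sum.inl j) ∉ M' := by
      intro h
      have := hWinj _ h _ hs rfl
      simp at this
    have hb2 : (Sum.inr j, Sum.inr j) ∉ M' := by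
      intro h
      have := hWinj _ h _ ht rfl
      simp at this
    have hbs : mSingle M' (Sum.inr j) := by
      intro x hx
      rcases hb_partner j x hx with rfl | rfl
      · exact hb1 hx
      · exact hb2 hx
    have hacc := (hAcc _ ht).2
    obtain ⟨σ, hσ⟩ : ∃ σ, I.wpref j i' = some σ := by
      rw [SMInst.wAcc] at hacc
      simp only [SMInst.translate, Option.isSome_map] at hacc
      exact Option.isSome_iff_exists.mp hacc
    refine hStab (Sum.inr j) (Sum.inr j)
      ⟨?_, ?_, Or.inl hbs, Or.inr ⟨Sum.inl i', ht, ⟨0, σ + 1, ?_, ?_, by omega⟩⟩⟩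
    · simp [SMInst.mAcc, SMInst.translate]
    · simp [SMInst.wAcc, SMInst.translate]
    · simp [SMInst.translate]
    · simp [SMInst.translate, hσ]
  -- acceptability of projected pairs
  have haccM : ∀ i j : Fin n, (i, j) ∈ projectM M' → I.mAcc i j ∧ I.wAcc j i := by
    intro i j hij
    rcases (mem_projectM M' i j).mp hij with h | h
    · obtain ⟨h1, h2⟩ := hAcc _ h
      constructor
      · rw [SMInst.mAcc] at h1 ⊢
        simpa only [SMInst.translate, Option.isSome_map] using h1
      · rw [SMInst.wAcc] at h2 ⊢
        simpa only [SMInst.translate] using h2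
    · obtain ⟨h1, h2⟩ := hAcc _ h
      constructor
      · rw [SMInst.mAcc] at h1 ⊢
        simpa only [SMInst.translate, Option.isSome_map] using h1
      · rw [SMInst.wAcc] at h2 ⊢
        simpa only [SMInst.translate, Option.isSome_map] using h2
  have hMatch : I.IsMatching (SMInst.projectM M') := by
    refine ⟨fun p hp => haccM p.1 p.2 hp, ?_, ?_⟩
    · rintro ⟨i, j⟩ hp ⟨i', j'⟩ hq h
      simp only at h
      subst h
      rcases (mem_projectM M' i j).mp hp with h | h <;>
        rcases (mem_projectM M' i j').mp hq with h' | h'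
      · have := hMinj _ h _ h' rfl
        simp only [Prod.mk.injEq, Sum.inl.injEq] at this
        simp [this.2]
      · have := hMinj _ h _ h' rfl
        simp at this
      · have := hMinj _ h _ h' rfl
        simp at this
      · have := hMinj _ h _ h' rfl
        simp only [Prod.mk.injEq, Sum.inr.injEq] at this
        simp [this.2]
    · rintro ⟨i, j⟩ hp ⟨i', j'⟩ hq h
      simp only at h
      subst h
      rcases (mem_projectM M' i j).mp hp with h | h <;>
        rcases (mem_projectM M' i' j).mp hq with h' | h'
      · have := hWinj _ h _ h' rfl
        simp only [Prod.mk.injEq, Sum.inl.injEq] at this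
        simp [this.1]
      · exact absurd (hNotBoth i i' j h h') (fun h => h)
      · exact absurd (hNotBoth i' i j h' h) (fun h => h)
      · have := hWinj _ h _ h' rfl
        simp only [Prod.mk.injEq, Sum.inl.injEq] at this
        simp [this.1]
  refine ⟨hMatch, ?_⟩
  intro m w hblk
  obtain ⟨hma, hwa, hms, hws⟩ := hblk
  obtain ⟨rm, hrm⟩ := Option.isSome_iff_exists.mp hma
  obtain ⟨ρ, hρ⟩ := Option.isSome_iff_exists.mp hwa
  rcases hws with hsing | ⟨m'', hm'', hwp⟩
  · -- w single in M
    by_cases ht : ∃ z, (z, Sum.inr w) ∈ M'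
    · obtain ⟨z, hz⟩ := ht
      have hz' : z = Sum.inr w := by
        rcases z with k | k
        · exact absurd ((mem_projectM M' k w).mpr (Or.inr hz)) (hsing k)
        · rcases eq_or_ne k w with rfl | hne
          · rfl
          · have := (hAcc _ hz).2
            exfalso
            simp [SMInst.wAcc, SMInst.translate, hne] at this
      subst hz'
      -- s_w is single in M'
      have hssing : wSingle M' (Sum.inl w) := by
        intro q hq
        rcases q with k | k
        · exact hsing k ((mem_projectM M' k w).mpr (Or.inl hq))
        · have hkw : k = w := by
            rcases eq_or_ne k w with rfl | hne
            · rfl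
            · have := (hAcc _ hq).2
              exfalso
              simp [SMInst.wAcc, SMInst.translate, hne] at this
          subst hkw
          have := hMinj _ hq _ hz rfl
          simp at this
      refine hStab (Sum.inl m) (Sum.inl w)
        ⟨?_, ?_, hManSide m _ w (Or.inl rfl) hms, Or.inl hssing⟩
      · simp [SMInst.mAcc, SMInst.translate, hrm]
      · rw [SMInst.wAcc]
        simpa only [SMInst.translate, SMInst.wAcc] using hwa
    · push_neg at ht
      have htsing : wSingle M' (Sum.inr w) := ht
      refine hStab (Sum.inl m) (Sum.inr w)
        ⟨?_, ?_, hManSide m _ w (Or.inr rfl) hms, Or.inl htsing⟩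
      · simp [SMInst.mAcc, SMInst.translate, hrm]
      · simp [SMInst.wAcc, SMInst.translate, hρ]
  · -- w matched in M to m'' whom she likes less than m
    obtain ⟨ρ₁, ρ₂, hρ₁, hρ₂, hρlt⟩ := hwp
    rcases (mem_projectM M' m'' w).mp hm'' with hs | htt
    · -- (a_{m''}, s_w) ∈ M'
      by_cases ht : ∃ z, (z, Sum.inr w) ∈ M'
      · obtain ⟨z, hz⟩ := ht
        rcases z with k | k
        · -- t_w matched to a_k : impossible
          exfalso
          have hk : (k, w) ∈ projectM M' := (mem_projectM M' k w).mpr (Or.inr hz)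
          have := hMatch.2.2 _ hk _ hm'' rfl
          simp only [Prod.mk.injEq] at this
          obtain ⟨rfl, -⟩ := this
          have := hMinj _ hz _ hs rfl
          simp at this
        · -- t_w matched to b_w: block (a_m, s_w)
          refine hStab (Sum.inl m) (Sum.inl w)
            ⟨?_, ?_, hManSide m _ w (Or.inl rfl) hms,
              Or.inr ⟨Sum.inl m'', hs, ⟨ρ₁, ρ₂, ?_, ?_, hρlt⟩⟩⟩
          · simp [SMInst.mAcc, SMInst.translate, hrm]
          · rw [SMInst.wAcc]
            simpa only [SMInst.translate, SMInst.wAcc] using hwa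
          · simpa only [SMInst.translate] using hρ₁
          · simpa only [SMInst.translate] using hρ₂
      · -- t_w single, so b_w single, and (b_w, t_w) blocks
        push_neg at ht
        have hb1 : (Sum.inr w, Sum.inl w) ∉ M' := by
          intro h
          have := hWinj _ h _ hs rfl
          simp at this
        have hbs : mSingle M' (Sum.inr w) := by
          intro x hx
          rcases hb_partner w x hx with rfl | rfl
          · exact hb1 hx
          · exact ht _ hx
        refine hStab (Sum.inr w) (Sum.inr w) ⟨?_, ?_, Or.inl hbs, Or.inl ht⟩
        · simp [SMInst.mAcc, SMInst.translate]
        · simp [SMInst.wAcc, SMInst.translate]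
    · -- (a_{m''}, t_w) ∈ M': block (a_m, t_w)
      refine hStab (Sum.inl m) (Sum.inr w)
        ⟨?_, ?_, hManSide m _ w (Or.inr rfl) hms,
          Or.inr ⟨Sum.inl m'', htt, ⟨ρ₁ + 1, ρ₂ + 1, ?_, ?_, by omega⟩⟩⟩
      · simp [SMInst.mAcc, SMInst.translate, hrm]
      · simp [SMInst.wAcc, SMInst.translate, hρ]
      · simp [SMInst.translate, hρ₁]
      · simp [SMInst.translate, hρ₂]
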